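/- Suppose τ₁ > 0, τ₂ ≥ 0, and 0 < s < n is an integer. Let C = τ₁·I_n + τ₂·J_n, where I_n is the identity matrix and J_n is the all-ones matrix of order n. Then x̂ = (s/n)·e is an optimal solution for max{f(C,s;x) : x ∈ P(n,s)}. -/

import Mathlib

open Matrix Real Set

noncomputable section

/-- The feasible polytope `P(n,s)`. -/
def PP (n s : ℕ) : Set (Fin n → ℝ) :=
  {x | (∑ i, x i) = (s : ℝ) ∧ ∀ i, 0 ≤ x i ∧ x i ≤ 1}

/-- The linx objective `f(C,s;x)`. -/
def fLinx {n : ℕ} (C : Matrix (Fin n) (Fin n) ℝ) (x : Fin n → ℝ) : ℝ :=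
  (1 / 2) * Real.log ((C * Matrix.diagonal x * C + Matrix.diagonal fun i => 1 - x i).det)


section AuxLinx
open Finset
variable {n : ℕ}


/-- key scalar: for PD S, (det S)^b ≤ det (a•1 + b•S) when a+b=1, a,b ≥ 0 -/
lemma detS_rpow_le {S : Matrix (Fin n) (Fin n) ℝ} (hS : S.PosDef)
    {a b : ℝ} (ha : 0 ≤ a) (hb : 0 ≤ b) (hab : a + b = 1) :
    S.det ^ b ≤ (a • (1 : Matrix (Fin n) (Fin n) ℝ) + b • S).det := by
  classical
  have hH := hS.isHermitian
  set U : Matrix (Fin n) (Fin n) ℝ := (hH.eigenvectorUnitary : Matrix (Fin n) (Fin n) ℝ) with hUdef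
  have hUU : U * star U = 1 := Matrix.mem_unitaryGroup_iff.mp hH.eigenvectorUnitary.2
  have hspec : S = U * Matrix.diagonal (RCLike.ofReal ∘ hH.eigenvalues) * star U :=
    hH.spectral_theorem
  have key : a • (1 : Matrix (Fin n) (Fin n) ℝ) + b • S
      = U * (Matrix.diagonal (fun i => a + b * hH.eigenvalues i)) * star U := by
    have h1 : (Matrix.diagonal (fun i => a + b * hH.eigenvalues i))
        = a • (1 : Matrix (Fin n) (Fin n) ℝ)
          + b • Matrix.diagonal (RCLike.ofReal ∘ hH.eigenvalues) := by
      rw [Matrix.smul_one_eq_diagonal]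
      ext i j
      by_cases h : i = j <;> simp [Matrix.diagonal, h, Matrix.diagonal_apply]
    rw [h1]
    rw [Matrix.mul_add, Matrix.add_mul, Matrix.mul_smul, Matrix.smul_mul,
      Matrix.mul_smul, Matrix.smul_mul, Matrix.mul_one, hUU, ← hspec]
  have hdet : (a • (1 : Matrix (Fin n) (Fin n) ℝ) + b • S).det
      = ∏ i, (a + b * hH.eigenvalues i) := by
    have h2 : U.det * (star U).det = 1 := by rw [← Matrix.det_mul, hUU, Matrix.det_one]
    rw [key, Matrix.det_mul, Matrix.det_mul, mul_right_comm, h2, one_mul, Matrix.det_diagonal]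
  have heig : ∀ i, 0 < hH.eigenvalues i := hS.eigenvalues_pos
  have hdetS : S.det = ∏ i, hH.eigenvalues i := by
    have := hH.det_eq_prod_eigenvalues
    simpa using this
  rw [hdet, hdetS]
  rw [← Real.finset_prod_rpow _ _ (fun i _ => (heig i).le)]
  refine Finset.prod_le_prod (fun i _ => Real.rpow_nonneg (heig i).le b) (fun i _ => ?_)
  have h3 := Real.geom_mean_le_arith_mean2_weighted ha hb zero_le_one (heig i).le hab
  simpa [Real.one_rpow] using h3


lemma conj_posDef {R B : Matrix (Fin n) (Fin n) ℝ} (hR : R.IsHermitian)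
    (hRu : IsUnit R.det) (hB : B.PosDef) : (R⁻¹ * B * R⁻¹).PosDef := by
  classical
  have hRinvH : (R⁻¹).IsHermitian := hR.inv
  refine Matrix.PosDef.of_dotProduct_mulVec_pos ?_ ?_
  · have : (R⁻¹ * B * R⁻¹)ᴴ = R⁻¹ᴴ * Bᴴ * R⁻¹ᴴ := by
      rw [Matrix.conjTranspose_mul, Matrix.conjTranspose_mul, mul_assoc]
    rw [Matrix.IsHermitian, this, hRinvH.eq, hB.isHermitian.eq]
  · intro v hv
    have hu : R⁻¹ *ᵥ v ≠ 0 := by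
      intro h
      apply hv
      have := congrArg (fun w => R *ᵥ w) h
      simpa [Matrix.mulVec_mulVec, Matrix.mul_nonsing_inv R hRu] using this
    have := hB.dotProduct_mulVec_pos hu
    have hcalc : star v ⬝ᵥ ((R⁻¹ * B * R⁻¹) *ᵥ v)
        = star (R⁻¹ *ᵥ v) ⬝ᵥ (B *ᵥ (R⁻¹ *ᵥ v)) := by
      simp only [star_trivial, ← Matrix.mulVec_mulVec]
      rw [Matrix.dotProduct_mulVec v, ← Matrix.mulVec_transpose]
      have : R⁻¹ᵀ = R⁻¹ := by
        rw [← Matrix.conjTranspose_eq_transpose_of_trivial]; exact hRinvH.eq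
      rw [this]
    rw [hcalc]
    simpa using this

open scoped MatrixOrder Matrix.Norms.L2Operator in
lemma det_rpow_mul_le {A B : Matrix (Fin n) (Fin n) ℝ} (hA : A.PosDef) (hB : B.PosDef)
    {a b : ℝ} (ha : 0 ≤ a) (hb : 0 ≤ b) (hab : a + b = 1) :
    A.det ^ a * B.det ^ b ≤ (a • A + b • B).det := by
  classical
  set R := CFC.sqrt A with hRdef
  have hRsd : R.PosSemidef := (CFC.sqrt_nonneg A).posSemidef
  have hRR : R * R = A := CFC.sqrt_mul_sqrt_self A hA.posSemidef.nonneg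
  have hdetA : 0 < A.det := hA.det_pos
  have hdetB : 0 < B.det := hB.det_pos
  have hdetR : R.det * R.det = A.det := by rw [← Matrix.det_mul, hRR]
  have hdetRne : R.det ≠ 0 := by
    intro h; rw [h, mul_zero] at hdetR; exact hdetA.ne' hdetR.symm
  have hRu : IsUnit R.det := isUnit_iff_ne_zero.mpr hdetRne
  have hRH : R.IsHermitian := hRsd.isHermitian
  set S := R⁻¹ * B * R⁻¹ with hSdef
  have hS : S.PosDef := conj_posDef hRH hRu hB
  have hRiR : R⁻¹ * R = 1 := Matrix.nonsing_inv_mul R hRu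
  have hRRi : R * R⁻¹ = 1 := Matrix.mul_nonsing_inv R hRu
  have hconj : a • A + b • B = R * (a • (1 : Matrix (Fin n) (Fin n) ℝ) + b • S) * R := by
    rw [Matrix.mul_add, Matrix.add_mul, Matrix.mul_smul, Matrix.smul_mul, Matrix.mul_smul,
      Matrix.smul_mul, Matrix.mul_one, hRR, hSdef]
    have hRBR : R * (R⁻¹ * B * R⁻¹) * R = B := by
      calc R * (R⁻¹ * B * R⁻¹) * R = (R * R⁻¹) * B * (R⁻¹ * R) := by
            simp only [Matrix.mul_assoc]
        _ = B := by rw [hRRi, hRiR, Matrix.one_mul, Matrix.mul_one]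
    rw [hRBR]
  have hdetS : S.det = B.det / A.det := by
    rw [hSdef, Matrix.det_mul, Matrix.det_mul, Matrix.det_nonsing_inv, mul_right_comm,
      ← mul_comm, Ring.inverse_eq_inv]
    field_simp [hdetRne, ← hdetR]
    rw [← hdetR]; ring
  have hkey := detS_rpow_le hS ha hb hab
  have hdetconj : (a • A + b • B).det
      = A.det * (a • (1 : Matrix (Fin n) (Fin n) ℝ) + b • S).det := by
    rw [hconj, Matrix.det_mul, Matrix.det_mul, mul_right_comm, hdetR]
  rw [hdetconj]
  calc A.det ^ a * B.det ^ b
      = A.det * S.det ^ b := by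
        have hAb : (0:ℝ) < A.det ^ b := Real.rpow_pos_of_pos hdetA b
        have h4 : A.det ^ a * A.det ^ b = A.det := by
          rw [← Real.rpow_add hdetA, hab, Real.rpow_one]
        rw [hdetS, Real.div_rpow hdetB.le hdetA.le, mul_div_assoc', eq_div_iff hAb.ne',
          mul_right_comm, h4]
    _ ≤ A.det * (a • (1 : Matrix (Fin n) (Fin n) ℝ) + b • S).det := by
        exact mul_le_mul_of_nonneg_left hkey hdetA.le


lemma C_posDef (τ₁ τ₂ : ℝ) (hτ₁ : 0 < τ₁) (hτ₂ : 0 ≤ τ₂) :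
    (τ₁ • (1 : Matrix (Fin n) (Fin n) ℝ) + τ₂ • Matrix.of (fun _ _ => (1 : ℝ))).PosDef := by
  classical
  refine Matrix.PosDef.of_dotProduct_mulVec_pos ?_ ?_
  · ext i j
    simp [Matrix.conjTranspose_apply, Matrix.one_apply, eq_comm]
  · intro v hv
    have hmv : (τ₁ • (1 : Matrix (Fin n) (Fin n) ℝ) + τ₂ • Matrix.of (fun _ _ => (1:ℝ))) *ᵥ v
        = fun i => τ₁ * v i + τ₂ * ∑ j, v j := by
      funext i
      simp [Matrix.mulVec, dotProduct, Matrix.one_apply, add_mul, ite_mul,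
        Finset.sum_add_distrib, Finset.mul_sum]
    rw [hmv]
    have hexp : star v ⬝ᵥ (fun i => τ₁ * v i + τ₂ * ∑ j, v j)
        = τ₁ * (∑ i, v i * v i) + τ₂ * (∑ i, v i) * (∑ i, v i) := by
      simp only [star_trivial, dotProduct]
      calc ∑ i, v i * (τ₁ * v i + τ₂ * ∑ j, v j)
          = ∑ i, (τ₁ * (v i * v i) + (v i) * (τ₂ * ∑ j, v j)) :=
            Finset.sum_congr rfl fun i _ => by ring
        _ = τ₁ * (∑ i, v i * v i) + (∑ i, v i) * (τ₂ * ∑ j, v j) := by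
            rw [Finset.sum_add_distrib, ← Finset.mul_sum, ← Finset.sum_mul]
        _ = τ₁ * (∑ i, v i * v i) + τ₂ * (∑ i, v i) * (∑ i, v i) := by ring
    rw [hexp]
    obtain ⟨i, hi⟩ := Function.ne_iff.mp hv
    have h1 : 0 < ∑ i, v i * v i :=
      Finset.sum_pos' (fun j _ => mul_self_nonneg _) ⟨i, Finset.mem_univ i, mul_self_pos.mpr hi⟩
    have h2 : 0 ≤ τ₂ * (∑ i, v i) * (∑ i, v i) := by
      rw [mul_assoc]; exact mul_nonneg hτ₂ (mul_self_nonneg _)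
    positivity

lemma M_posDef {C : Matrix (Fin n) (Fin n) ℝ} (hC : C.PosDef) {x : Fin n → ℝ}
    (hx : ∀ i, 0 ≤ x i ∧ x i ≤ 1) :
    (C * Matrix.diagonal x * C + Matrix.diagonal fun i => 1 - x i).PosDef := by
  classical
  have hCH : C.IsHermitian := hC.isHermitian
  have hCT : Cᵀ = C := by
    rw [← Matrix.conjTranspose_eq_transpose_of_trivial]; exact hCH.eq
  refine Matrix.PosDef.of_dotProduct_mulVec_pos ?_ ?_
  · have h1 : (C * Matrix.diagonal x * C).IsHermitian := by
      have := Matrix.isHermitian_mul_mul_conjTranspose C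
        (Matrix.isHermitian_diagonal x)
      rwa [hCH.eq] at this
    exact h1.add (Matrix.isHermitian_diagonal _)
  · intro v hv
    set w := C *ᵥ v with hw
    have hCv : 0 < v ⬝ᵥ w := by simpa using hC.dotProduct_mulVec_pos hv
    have hsplit : star v ⬝ᵥ ((C * Matrix.diagonal x * C + Matrix.diagonal fun i => 1 - x i) *ᵥ v)
        = ∑ i, (x i * (w i * w i) + (1 - x i) * (v i * v i)) := by
      rw [Matrix.add_mulVec, dotProduct_add]
      have hterm1 : star v ⬝ᵥ ((C * Matrix.diagonal x * C) *ᵥ v)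
          = ∑ i, x i * (w i * w i) := by
        rw [← Matrix.mulVec_mulVec, ← Matrix.mulVec_mulVec, star_trivial,
          Matrix.dotProduct_mulVec v C, ← Matrix.mulVec_transpose, hCT, ← hw]
        simp [dotProduct, Matrix.mulVec_diagonal]
        exact Finset.sum_congr rfl fun i _ => by ring
      have hterm2 : star v ⬝ᵥ ((Matrix.diagonal fun i => 1 - x i) *ᵥ v)
          = ∑ i, (1 - x i) * (v i * v i) := by
        simp [dotProduct, Matrix.mulVec_diagonal]
        exact Finset.sum_congr rfl fun i _ => by ring
      rw [hterm1, hterm2, ← Finset.sum_add_distrib]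
    rw [hsplit]
    have hnn : ∀ i ∈ Finset.univ, 0 ≤ x i * (w i * w i) + (1 - x i) * (v i * v i) := by
      intro i _
      have := hx i
      have h1 : 0 ≤ x i * (w i * w i) := mul_nonneg this.1 (mul_self_nonneg _)
      have h2 : 0 ≤ (1 - x i) * (v i * v i) :=
        mul_nonneg (by linarith [this.2]) (mul_self_nonneg _)
      linarith
    rcases lt_or_eq_of_le (Finset.sum_nonneg hnn) with h | h
    · exact h
    · exfalso
      have hzero : ∀ i ∈ Finset.univ, x i * (w i * w i) + (1 - x i) * (v i * v i) = 0 :=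
        (Finset.sum_eq_zero_iff_of_nonneg hnn).mp h.symm
      have hvw : ∀ i, v i * w i = 0 := by
        intro i
        have hi := hzero i (Finset.mem_univ i)
        have hx1 : 0 ≤ x i * (w i * w i) := mul_nonneg (hx i).1 (mul_self_nonneg _)
        have hx2 : 0 ≤ (1 - x i) * (v i * v i) :=
          mul_nonneg (by linarith [(hx i).2]) (mul_self_nonneg _)
        have e1 : x i * (w i * w i) = 0 := by linarith
        have e2 : (1 - x i) * (v i * v i) = 0 := by linarith
        by_cases hvi : v i = 0
        · simp [hvi]
        · have : 1 - x i = 0 := by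
            rcases mul_eq_zero.mp e2 with h' | h'
            · exact h'
            · exact absurd (by simpa [mul_self_eq_zero] using h') hvi
          have hxi1 : x i = 1 := by linarith
          have : w i * w i = 0 := by
            rcases mul_eq_zero.mp e1 with h' | h'
            · rw [hxi1] at h'; norm_num at h'
            · exact h'
          have : w i = 0 := by simpa [mul_self_eq_zero] using this
          simp [this]
      have : v ⬝ᵥ w = 0 := by
        simp [dotProduct]
        exact Finset.sum_eq_zero fun i _ => hvw i
      linarith
lemma convex_PP (n s : ℕ) : Convex ℝ (PP n s) := by
  intro x hx y hy a b ha hb hab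
  refine ⟨?_, fun i => ?_⟩
  · simp only [Pi.add_apply, Pi.smul_apply, smul_eq_mul]
    rw [Finset.sum_add_distrib, ← Finset.mul_sum, ← Finset.mul_sum, hx.1, hy.1]
    linear_combination (s : ℝ) * hab
  · obtain ⟨h1, h2⟩ := hx.2 i
    obtain ⟨h3, h4⟩ := hy.2 i
    simp only [Pi.add_apply, Pi.smul_apply, smul_eq_mul]
    constructor
    · exact add_nonneg (mul_nonneg ha h1) (mul_nonneg hb h3)
    · nlinarith

lemma fLinx_concaveOn {s : ℕ} {C : Matrix (Fin n) (Fin n) ℝ} (hC : C.PosDef) :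
    ConcaveOn ℝ (PP n s) (fLinx C) := by
  refine ⟨convex_PP n s, ?_⟩
  intro x hx y hy a b ha hb hab
  set Mx := C * Matrix.diagonal x * C + Matrix.diagonal fun i => 1 - x i with hMxd
  set My := C * Matrix.diagonal y * C + Matrix.diagonal fun i => 1 - y i with hMyd
  have hMx : Mx.PosDef := M_posDef hC hx.2
  have hMy : My.PosDef := M_posDef hC hy.2
  have haff : C * Matrix.diagonal (a • x + b • y) * C
      + Matrix.diagonal (fun i => 1 - (a • x + b • y) i) = a • Mx + b • My := by
    have hd1 : Matrix.diagonal (a • x + b • y)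
        = a • Matrix.diagonal x + b • Matrix.diagonal y := by
      ext i j
      by_cases h : i = j <;> simp [Matrix.diagonal_apply, h]
    have hd2 : (Matrix.diagonal fun i => 1 - (a • x + b • y) i)
        = a • Matrix.diagonal (fun i => 1 - x i) + b • Matrix.diagonal (fun i => 1 - y i) := by
      ext i j
      by_cases h : i = j
      · simp only [h, Matrix.add_apply, Matrix.smul_apply, Matrix.diagonal_apply_eq,
          Pi.add_apply, Pi.smul_apply, smul_eq_mul]
        ring_nf
        linarith
      · simp [Matrix.diagonal_apply, h]
    rw [hd1, hd2, hMxd, hMyd]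
    simp only [Matrix.mul_add, Matrix.add_mul, Matrix.mul_smul, Matrix.smul_mul, smul_add]
    abel
  have hkey := det_rpow_mul_le hMx hMy ha hb hab
  have hlog : a * Real.log Mx.det + b * Real.log My.det
      ≤ Real.log (a • Mx + b • My).det := by
    have h1 : Real.log (Mx.det ^ a * My.det ^ b)
        = a * Real.log Mx.det + b * Real.log My.det := by
      rw [Real.log_mul (Real.rpow_pos_of_pos hMx.det_pos a).ne'
        (Real.rpow_pos_of_pos hMy.det_pos b).ne',
        Real.log_rpow hMx.det_pos, Real.log_rpow hMy.det_pos]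
    rw [← h1]
    exact Real.log_le_log (mul_pos (Real.rpow_pos_of_pos hMx.det_pos a)
      (Real.rpow_pos_of_pos hMy.det_pos b)) hkey
  simp only [fLinx, haff, smul_eq_mul]
  linarith

lemma fLinx_comp_perm (τ₁ τ₂ : ℝ) (x : Fin n → ℝ) (σ : Equiv.Perm (Fin n)) :
    fLinx (τ₁ • (1 : Matrix (Fin n) (Fin n) ℝ) + τ₂ • Matrix.of (fun _ _ => (1 : ℝ))) (x ∘ σ)
      = fLinx (τ₁ • (1 : Matrix (Fin n) (Fin n) ℝ) + τ₂ • Matrix.of (fun _ _ => (1 : ℝ))) x := by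
  classical
  set C : Matrix (Fin n) (Fin n) ℝ := τ₁ • 1 + τ₂ • Matrix.of (fun _ _ => (1 : ℝ)) with hCdef
  have hCe : ∀ a b : Fin n, C a b = (if a = b then τ₁ else 0) + τ₂ := by
    intro a b
    simp [hCdef, Matrix.one_apply, mul_ite]
  have hCσ : ∀ a b : Fin n, C (σ a) (σ b) = C a b := by
    intro a b
    rw [hCe, hCe]
    simp [EmbeddingLike.apply_eq_iff_eq]
  have hentry : ∀ (y : Fin n → ℝ) (i j : Fin n),
      (C * Matrix.diagonal y * C) i j = ∑ k, C i k * y k * C k j := by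
    intro y i j
    rw [Matrix.mul_apply]
    exact Finset.sum_congr rfl fun k _ => by rw [Matrix.mul_diagonal]
  have hM : C * Matrix.diagonal (x ∘ σ) * C + Matrix.diagonal (fun i => 1 - (x ∘ σ) i)
      = (C * Matrix.diagonal x * C + Matrix.diagonal fun i => 1 - x i).submatrix σ σ := by
    ext i j
    rw [Matrix.add_apply, Matrix.submatrix_apply, Matrix.add_apply, hentry, hentry]
    congr 1
    · rw [← Equiv.sum_comp σ (fun k => C (σ i) k * x k * C k (σ j))]
      exact Finset.sum_congr rfl fun k _ => by rw [hCσ, hCσ, Function.comp_apply]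
    · rw [Matrix.diagonal_apply, Matrix.diagonal_apply]
      simp [EmbeddingLike.apply_eq_iff_eq]
  rw [fLinx, fLinx, hM, Matrix.det_submatrix_equiv_self]


end AuxLinx

theorem stmt_13 (n s : ℕ) (hs : 0 < s) (hsn : s < n)
    (τ₁ τ₂ : ℝ) (hτ₁ : 0 < τ₁) (hτ₂ : 0 ≤ τ₂)
    (C : Matrix (Fin n) (Fin n) ℝ)
    (hC : C = τ₁ • (1 : Matrix (Fin n) (Fin n) ℝ) + τ₂ • Matrix.of (fun _ _ => (1 : ℝ)))
    (xh : Fin n → ℝ) (hxh : xh = fun _ => (s : ℝ) / (n : ℝ)) :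
    xh ∈ PP n s ∧ ∀ x ∈ PP n s, fLinx C x ≤ fLinx C xh := by
  have hn : (0 : ℝ) < n := by exact_mod_cast hs.trans hsn
  have hne : (n : ℝ) ≠ 0 := hn.ne'
  have hsle : (s : ℝ) ≤ (n : ℝ) := by exact_mod_cast hsn.le
  have hxhPP : xh ∈ PP n s := by
    subst hxh
    refine ⟨?_, fun i => ⟨by positivity, ?_⟩⟩
    · simp [Finset.sum_const, Finset.card_univ]
      field_simp
    · rw [div_le_one hn]; exact hsle
  refine ⟨hxhPP, fun x hx => ?_⟩
  haveI : NeZero n := ⟨by omega⟩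
  have hCpd : C.PosDef := hC ▸ C_posDef τ₁ τ₂ hτ₁ hτ₂
  have hconc : ConcaveOn ℝ (PP n s) (fLinx C) := fLinx_concaveOn hCpd
  set w : Fin n → ℝ := fun _ => 1 / n with hw
  set p : Fin n → (Fin n → ℝ) := fun k => x ∘ (Equiv.addLeft k) with hp
  have h₀ : ∀ k ∈ Finset.univ, 0 ≤ w ((k : Fin n)) := fun k _ => by positivity
  have h₁ : ∑ k : Fin n, w k = 1 := by
    simp [hw, Finset.sum_const, Finset.card_univ]
  have hmem : ∀ k ∈ Finset.univ, p k ∈ PP n s := by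
    intro k _
    refine ⟨?_, fun i => hx.2 _⟩
    rw [hp]
    simpa using (Equiv.sum_comp (Equiv.addLeft k) x).trans hx.1
  have hsum : ∑ k : Fin n, w k • p k = xh := by
    funext i
    rw [hxh]
    simp only [Finset.sum_apply, Pi.smul_apply, smul_eq_mul, hw, hp]
    rw [← Finset.mul_sum]
    have hh : ∑ k : Fin n, (x ∘ (Equiv.addLeft k)) i = (s : ℝ) := by
      have h2 := Equiv.sum_comp (Equiv.addRight i) x
      calc ∑ k : Fin n, (x ∘ (Equiv.addLeft k)) i
          = ∑ k : Fin n, x ((Equiv.addRight i) k) := rfl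
        _ = (s : ℝ) := h2.trans hx.1
    rw [hh]
    ring
  have hJ := hconc.le_map_sum h₀ h₁ hmem
  rw [hsum] at hJ
  have heach : ∀ k : Fin n, fLinx C (p k) = fLinx C x := by
    intro k
    rw [hp, hC]
    exact fLinx_comp_perm τ₁ τ₂ x (Equiv.addLeft k)
  calc fLinx C x = ∑ k : Fin n, w k • fLinx C (p k) := by
        simp only [heach, hw, smul_eq_mul, Finset.sum_const, Finset.card_univ,
          Fintype.card_fin, nsmul_eq_mul]
        field_simp
    _ ≤ fLinx C xh := hJ
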